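/- Let W : ℝ → ℝ be concave and define for y ∈ ℝ the optimal charging v*(y) = argmax over v ∈ [0, min(v̄, y)] of −c·v + W(y − v), for c ≥ 0. Then the map y ↦ y − v*(y) (post-decision state) is nondecreasing in y, for any selection of maximizers. -/

import Mathlib

theorem stmt_18 (W : ℝ → ℝ) (hW : ConcaveOn ℝ Set.univ W)
    (c vbar : ℝ) (hc : 0 ≤ c) (hvbar : 0 < vbar) :
    ∃ σ : ℝ → ℝ,
      (∀ y ∈ Set.Ici (0:ℝ), σ y ∈ Set.Icc (0:ℝ) (min vbar y) ∧
        ∀ v ∈ Set.Icc (0:ℝ) (min vbar y),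
          -c * v + W (y - v) ≤ -c * σ y + W (y - σ y)) ∧
      MonotoneOn (fun y => y - σ y) (Set.Ici (0:ℝ)) := by
  have hWc : Continuous W := by
    rw [← continuousOn_univ]
    exact hW.continuousOn isOpen_univ
  set h : ℝ → ℝ := fun x => c * x + W x with hh
  have hhc : Continuous h := by continuity
  set L : ℝ → ℝ := fun y => max 0 (y - vbar) with hL
  set A : ℝ → Set ℝ := fun y => {x ∈ Set.Icc (L y) y | ∀ z ∈ Set.Icc (L y) y, h z ≤ h x}
    with hA
  -- A y is nonempty and compact, for y ≥ 0
  have hLy : ∀ y : ℝ, 0 ≤ y → L y ≤ y := fun y hy =>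
    max_le hy (by linarith)
  have hAc : ∀ y : ℝ, IsClosed (A y) := by
    intro y
    have : A y = Set.Icc (L y) y ∩ ⋂ z ∈ Set.Icc (L y) y, {x | h z ≤ h x} := by
      ext x; simp [hA, Set.mem_iInter]
    rw [this]
    exact isClosed_Icc.inter (isClosed_biInter fun z _ =>
      isClosed_le continuous_const hhc)
  have hAne : ∀ y : ℝ, 0 ≤ y → (A y).Nonempty := by
    intro y hy
    obtain ⟨x, hx, hmax⟩ := isCompact_Icc.exists_isMaxOn (Set.nonempty_Icc.2 (hLy y hy))
      hhc.continuousOn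
    exact ⟨x, hx, fun z hz => hmax hz⟩
  have hAcomp : ∀ y : ℝ, IsCompact (A y) := fun y =>
    isCompact_Icc.of_isClosed_subset (hAc y) (fun x hx => hx.1)
  have hmem : ∀ y : ℝ, 0 ≤ y → sSup (A y) ∈ A y := fun y hy =>
    (hAcomp y).sSup_mem (hAne y hy)
  refine ⟨fun y => y - sSup (A y), ?_, ?_⟩
  · intro y hy
    have hy : (0:ℝ) ≤ y := hy
    obtain ⟨hxI, hxmax⟩ := hmem y hy
    beta_reduce
    constructor
    · constructor
      · linarith [hxI.2]
      · simp only [le_min_iff]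
        constructor
        · have := hxI.1
          have : y - vbar ≤ sSup (A y) := le_trans (le_max_right _ _) this
          linarith
        · have : (0:ℝ) ≤ sSup (A y) := le_trans (le_max_left _ _) hxI.1
          linarith
    · intro v hv
      have hzI : y - v ∈ Set.Icc (L y) y := by
        constructor
        · apply max_le <;> [skip; skip]
          · linarith [hv.2, min_le_right vbar y]
          · linarith [hv.2, min_le_left vbar y]
        · linarith [hv.1]
      have := hxmax (y - v) hzI
      simp only [hh] at this
      have heq : y - (y - sSup (A y)) = sSup (A y) := by ring
      rw [heq]
      nlinarith
  · intro y1 hy1 y2 hy2 hle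
    simp only [Set.mem_Ici] at hy1 hy2
    simp only [sub_sub_cancel]
    by_contra hlt
    push_neg at hlt
    set x1 := sSup (A y1)
    set x2 := sSup (A y2)
    obtain ⟨hx1I, hx1m⟩ := hmem y1 hy1
    obtain ⟨hx2I, hx2m⟩ := hmem y2 hy2
    -- x2 < x1
    have hx1I2 : x1 ∈ Set.Icc (L y2) y2 := by
      constructor
      · exact le_of_lt (lt_of_le_of_lt hx2I.1 hlt)
      · linarith [hx1I.2]
    have hx2I1 : x2 ∈ Set.Icc (L y1) y1 := by
      constructor
      · exact le_trans (max_le_max le_rfl (by linarith)) hx2I.1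
      · linarith [hx1I.2, le_of_lt hlt]
    have h12 : h x1 ≤ h x2 := hx2m x1 hx1I2
    have h21 : h x2 ≤ h x1 := hx1m x2 hx2I1
    have : x1 ∈ A y2 := ⟨hx1I2, fun z hz => le_trans (hx2m z hz) (le_antisymm h12 h21).ge⟩
    have : x1 ≤ x2 := le_csSup (hAcomp y2).bddAbove this
    linarith
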